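/- Let G be a group, let A be a sub-ℂ[G]-bimodule of the convolution bimodule of functions G → ℂ such that every element of A is a bounded function (A ⊆ ℓ^∞(G)), let N be a norm on A, and suppose there is a constant C > 0 such that sup_{u∈G} |a(u)| ≤ C·N(a) for all a ∈ A (the norm N is subordinate to the supremum norm). If d : ℂ[G] → A is a derivation which is bounded from the supremum norm to N, i.e. there exists M such that N(d x) ≤ M·‖x‖_s for all x ∈ ℂ[G], then d is quasi-inner: (d δ_t)(g·t) = 0 for all g, t ∈ G with g·t = t·g. -/

import Mathlib

/-- Left action of the group ring `ℂ[G]` on functions `G → ℂ` by convolution. -/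
noncomputable def convL (G : Type*) [Group G] (x : MonoidAlgebra ℂ G) (f : G → ℂ) : G → ℂ :=
  fun u => ∑ g ∈ x.coeff.support, x.coeff g * f (g⁻¹ * u)

/-- Right action of the group ring `ℂ[G]` on functions `G → ℂ` by convolution. -/
noncomputable def convR (G : Type*) [Group G] (f : G → ℂ) (x : MonoidAlgebra ℂ G) : G → ℂ :=
  fun u => ∑ g ∈ x.coeff.support, f (u * g⁻¹) * x.coeff g

/-- The supremum norm on the group ring `ℂ[G]`. -/
noncomputable def supNorm {G : Type*} [Group G] (x : MonoidAlgebra ℂ G) : ℝ :=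
  ⨆ g, ‖x.coeff g‖


lemma convL_single' {G : Type*} [Group G] (a : G) (f : G → ℂ) (u : G) :
    convL G (MonoidAlgebra.single a 1) f u = f (a⁻¹ * u) := by
  unfold convL
  rw [show (MonoidAlgebra.single a (1:ℂ)).coeff.support = {a} from
    Finsupp.support_single_ne_zero a one_ne_zero, Finset.sum_singleton,
    MonoidAlgebra.coeff_single, Finsupp.single_eq_same, one_mul]

lemma convR_single' {G : Type*} [Group G] (a : G) (f : G → ℂ) (u : G) :
    convR G f (MonoidAlgebra.single a 1) u = f (u * a⁻¹) := by
  unfold convR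
  rw [show (MonoidAlgebra.single a (1:ℂ)).coeff.support = {a} from
    Finsupp.support_single_ne_zero a one_ne_zero, Finset.sum_singleton,
    MonoidAlgebra.coeff_single, Finsupp.single_eq_same, mul_one]

lemma supNorm_single' {G : Type*} [Group G] (a : G) :
    supNorm (MonoidAlgebra.single a (1:ℂ)) = 1 := by
  unfold supNorm
  apply le_antisymm
  · apply ciSup_le
    intro g
    classical
    rw [MonoidAlgebra.coeff_single, Finsupp.single_apply]
    split <;> simp
  · have hb : BddAbove (Set.range fun g => ‖(MonoidAlgebra.single a (1:ℂ)).coeff g‖) := by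
      refine ⟨1, ?_⟩
      rintro x ⟨g, rfl⟩
      classical
      simp only []
      rw [show ((MonoidAlgebra.single a (1:ℂ)).coeff g) = if a = g then 1 else 0 from Finsupp.single_apply]
      split <;> simp
    have := le_ciSup hb a
    simpa [MonoidAlgebra.coeff_single] using this

/-- If `A` is a sub-`ℂ[G]`-bimodule of the convolution bimodule of functions `G → ℂ`
consisting of bounded functions, `N` is a norm on `A` subordinate to the supremum norm
(`sup_u |a u| ≤ C * N a`), and `d : ℂ[G] → A` is a derivation bounded from the supremum
norm to `N`, then `d` is quasi-inner: `(d δ_t)(g*t) = 0` whenever `g*t = t*g`. -/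
theorem derivation_into_subordinate_bimodule_quasiInner
    (G : Type*) [Group G] (A : Submodule ℂ (G → ℂ))
    -- A is closed under the left and right ℂ[G]-actions (a sub-bimodule)
    (hAL : ∀ (x : MonoidAlgebra ℂ G) (a : G → ℂ), a ∈ A → convL G x a ∈ A)
    (hAR : ∀ (x : MonoidAlgebra ℂ G) (a : G → ℂ), a ∈ A → convR G a x ∈ A)
    -- every element of A is a bounded function (A ⊆ ℓ^∞(G))
    (hAbdd : ∀ a ∈ A, ∃ B : ℝ, ∀ u : G, ‖a u‖ ≤ B)
    -- N is a norm on A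
    (N : (G → ℂ) → ℝ)
    (hN_nonneg : ∀ a ∈ A, 0 ≤ N a)
    (hN_eq_zero : ∀ a ∈ A, (N a = 0 ↔ a = 0))
    (hN_add : ∀ a ∈ A, ∀ b ∈ A, N (a + b) ≤ N a + N b)
    (hN_smul : ∀ (c : ℂ), ∀ a ∈ A, N (c • a) = ‖c‖ * N a)
    -- N is subordinate to the supremum norm
    (C : ℝ) (hC : 0 < C)
    (hsub : ∀ a ∈ A, ∀ u : G, ‖a u‖ ≤ C * N a)
    -- d is a derivation ℂ[G] → A
    (d : MonoidAlgebra ℂ G →ₗ[ℂ] (G → ℂ))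
    (hrange : ∀ x : MonoidAlgebra ℂ G, d x ∈ A)
    (hder : ∀ x y : MonoidAlgebra ℂ G, d (x * y) = convR G (d x) y + convL G x (d y))
    -- d is bounded from the supremum norm to N
    (M : ℝ) (hbdd : ∀ x : MonoidAlgebra ℂ G, N (d x) ≤ M * supNorm x) :
    ∀ g t : G, g * t = t * g → d (MonoidAlgebra.single t (1 : ℂ)) (g * t) = 0 := by
  intro g t hgt
  have hc : Commute g t := hgt
  -- key induction
  have key : ∀ n : ℕ, d (MonoidAlgebra.single (t ^ (n + 1)) (1:ℂ)) (g * t ^ (n + 1))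
      = ((n + 1 : ℕ) : ℂ) * d (MonoidAlgebra.single t (1:ℂ)) (g * t) := by
    intro n
    induction n with
    | zero => simp [pow_one]
    | succ n ih =>
      have hsingle : MonoidAlgebra.single (t ^ (n + 2)) (1:ℂ)
          = MonoidAlgebra.single (t ^ (n + 1)) (1:ℂ) * MonoidAlgebra.single t (1:ℂ) := by
        rw [MonoidAlgebra.single_mul_single, one_mul, ← pow_succ]
      have harg1 : g * t ^ (n + 2) * t⁻¹ = g * t ^ (n + 1) := by
        rw [pow_succ, ← mul_assoc, mul_assoc, mul_inv_cancel, mul_one]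
      have harg2 : (t ^ (n + 1))⁻¹ * (g * t ^ (n + 2)) = g * t := by
        have hcomm : (t ^ (n + 1))⁻¹ * g = g * (t ^ (n + 1))⁻¹ :=
          ((hc.pow_right (n + 1)).inv_right).symm
        rw [← mul_assoc, hcomm, mul_assoc]
        congr 1
        rw [show t ^ (n + 2) = t ^ (n + 1) * t from pow_succ t (n + 1), inv_mul_cancel_left]
      rw [hsingle, hder]
      have : (convR G (d (MonoidAlgebra.single (t ^ (n + 1)) (1:ℂ))) (MonoidAlgebra.single t 1)
          + convL G (MonoidAlgebra.single (t ^ (n + 1)) (1:ℂ)) (d (MonoidAlgebra.single t 1)))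
          (g * t ^ (n + 2))
          = d (MonoidAlgebra.single (t ^ (n + 1)) (1:ℂ)) (g * t ^ (n + 1))
            + d (MonoidAlgebra.single t (1:ℂ)) (g * t) := by
        rw [Pi.add_apply, convR_single', convL_single', harg1, harg2]
      rw [this, ih]
      push_cast
      ring
  -- bound
  set v : ℂ := d (MonoidAlgebra.single t (1:ℂ)) (g * t) with hv
  have hbound : ∀ n : ℕ, ((n : ℝ) + 1) * ‖v‖ ≤ C * M := by
    intro n
    have h1 := hsub _ (hrange (MonoidAlgebra.single (t ^ (n + 1)) (1:ℂ))) (g * t ^ (n + 1))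
    rw [key n] at h1
    have h2 : ‖((n + 1 : ℕ) : ℂ) * v‖ = ((n : ℝ) + 1) * ‖v‖ := by
      rw [norm_mul, Complex.norm_natCast]
      push_cast
      ring
    rw [h2] at h1
    have h3 : C * N (d (MonoidAlgebra.single (t ^ (n + 1)) (1:ℂ))) ≤ C * M := by
      have := hbdd (MonoidAlgebra.single (t ^ (n + 1)) (1:ℂ))
      rw [supNorm_single', mul_one] at this
      exact mul_le_mul_of_nonneg_left this hC.le
    exact h1.trans h3
  -- conclude v = 0
  by_contra hne
  have hpos : 0 < ‖v‖ := by
    simpa [norm_pos_iff] using hne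
  obtain ⟨n, hn⟩ := exists_nat_gt (C * M / ‖v‖)
  have : C * M < (n : ℝ) * ‖v‖ := (div_lt_iff₀ hpos).mp hn
  have h4 : ((n : ℝ)) * ‖v‖ ≤ ((n : ℝ) + 1) * ‖v‖ := by nlinarith
  linarith [hbound n]
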